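/- For every real x and every real n > 0, the equation n = 2s·(arctan(s) − arctan(x)) in the unknown s has exactly two real solutions s₋ and s₊, which satisfy s₋ < min(x, 0) and s₊ > max(x, 0). -/

import Mathlib

open Real Filter Set Topology

private lemma sp_hasDerivAt (x s : ℝ) :
    HasDerivAt (fun s => 2 * s * (arctan s - arctan x))
      (2 * (arctan s - arctan x) + 2 * s * (1 / (1 + s ^ 2))) s := by
  have h1 : HasDerivAt (fun s : ℝ => 2 * s) 2 s := by
    simpa using (hasDerivAt_id s).const_mul 2
  have h2 : HasDerivAt (fun s : ℝ => arctan s - arctan x) (1 / (1 + s ^ 2)) s :=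
    (Real.hasDerivAt_arctan s).sub_const _
  exact h1.mul h2

/-- For every real `x` and every `n > 0`, the equation `n = 2s(arctan s - arctan x)`
has exactly two real solutions `s₋` and `s₊`, with `s₋ < min x 0` and `s₊ > max x 0`. -/
theorem saddle_point_equation_two_solutions (x n : ℝ) (hn : 0 < n) :
    ∃ sm sp : ℝ, sm < min x 0 ∧ max x 0 < sp ∧
      ∀ s : ℝ, n = 2 * s * (arctan s - arctan x) ↔ (s = sm ∨ s = sp) := by
  set g : ℝ → ℝ := fun s => 2 * s * (arctan s - arctan x) with hg
  set a : ℝ := max x 0 with ha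
  set m : ℝ := min x 0 with hm
  have hgc : Continuous g := by
    apply Continuous.mul
    · fun_prop
    · exact (Real.continuous_arctan.sub continuous_const)
  -- value at the endpoints is 0
  have hga : g a = 0 := by
    rcases le_or_gt x 0 with h | h
    · simp [hg, ha, max_eq_right h]
    · simp [hg, ha, max_eq_left h.le]
  have hgm : g m = 0 := by
    rcases le_or_gt x 0 with h | h
    · simp [hg, hm, min_eq_left h]
    · simp [hg, hm, min_eq_right h.le]
  -- strict monotonicity on [a, ∞)
  have hmono : StrictMonoOn g (Ici a) := by
    apply strictMonoOn_of_deriv_pos (convex_Ici a) hgc.continuousOn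
    intro s hs
    rw [interior_Ici] at hs
    rw [(sp_hasDerivAt x s).deriv]
    have hsx : x < s := lt_of_le_of_lt (le_max_left _ _) hs
    have hs0 : 0 < s := lt_of_le_of_lt (le_max_right _ _) hs
    have h1 : arctan x < arctan s := Real.arctan_strictMono hsx
    have h2 : (0:ℝ) < 1 / (1 + s ^ 2) := by positivity
    nlinarith
  -- strict antitonicity on (-∞, m]
  have hanti : StrictAntiOn g (Iic m) := by
    apply strictAntiOn_of_deriv_neg (convex_Iic m) hgc.continuousOn
    intro s hs
    rw [interior_Iic] at hs
    rw [(sp_hasDerivAt x s).deriv]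
    have hsx : s < x := lt_of_lt_of_le hs (min_le_left _ _)
    have hs0 : s < 0 := lt_of_lt_of_le hs (min_le_right _ _)
    have h1 : arctan s < arctan x := Real.arctan_strictMono hsx
    have h2 : (0:ℝ) < 1 / (1 + s ^ 2) := by positivity
    nlinarith
  -- tendsto atTop
  have htop : Tendsto g atTop atTop := by
    have h1 : Tendsto (fun s : ℝ => 2 * s) atTop atTop :=
      tendsto_id.const_mul_atTop two_pos
    have h2 : Tendsto (fun s : ℝ => arctan s - arctan x) atTop (𝓝 (π / 2 - arctan x)) :=
      (Real.tendsto_arctan_atTop.mono_right nhdsWithin_le_nhds).sub_const _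
    have hc : 0 < π / 2 - arctan x := sub_pos.2 (Real.arctan_lt_pi_div_two x)
    exact h1.atTop_mul_pos hc h2
  -- tendsto atTop at atBot
  have hbot : Tendsto g atBot atTop := by
    have h1 : Tendsto (fun s : ℝ => 2 * -s) atBot atTop :=
      (tendsto_neg_atBot_atTop.const_mul_atTop two_pos)
    have h2 : Tendsto (fun s : ℝ => arctan x - arctan s) atBot
        (𝓝 (arctan x - -(π / 2))) :=
      tendsto_const_nhds.sub (Real.tendsto_arctan_atBot.mono_right nhdsWithin_le_nhds)
    have hc : 0 < arctan x - -(π / 2) := by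
      have := Real.neg_pi_div_two_lt_arctan x; linarith
    have := h1.atTop_mul_pos hc h2
    refine this.congr fun s => by ring
  -- existence of sp
  obtain ⟨b, hb1, hb2⟩ := ((htop.eventually_gt_atTop n).and (eventually_gt_atTop a)).exists
  have hab : a ≤ b := hb2.le
  have hmem : n ∈ Icc (g a) (g b) := ⟨by rw [hga]; exact hn.le, hb1.le⟩
  obtain ⟨sp, hsp, hgsp⟩ := intermediate_value_Icc hab hgc.continuousOn hmem
  have hspa : a < sp := by
    rcases eq_or_lt_of_le hsp.1 with h | h
    · exfalso; rw [← h, hga] at hgsp; linarith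
    · exact h
  -- existence of sm
  obtain ⟨c, hc1, hc2⟩ := ((hbot.eventually_gt_atTop n).and (eventually_lt_atBot m)).exists
  have hcm : c ≤ m := hc2.le
  have hmem' : n ∈ Icc (g m) (g c) := ⟨by rw [hgm]; exact hn.le, hc1.le⟩
  obtain ⟨sm, hsm, hgsm⟩ := intermediate_value_Icc' hcm hgc.continuousOn hmem'
  have hsmm : sm < m := by
    rcases eq_or_lt_of_le hsm.2 with h | h
    · exfalso; rw [h, hgm] at hgsm; linarith
    · exact h
  -- middle region: no solutions
  have hmid : ∀ s, m ≤ s → s ≤ a → g s ≤ 0 := by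
    intro s h1 h2
    rcases le_or_gt 0 s with hs | hs
    · rcases le_or_gt s x with hsx | hsx
      · have : arctan s ≤ arctan x := Real.arctan_strictMono.monotone hsx
        have : arctan s - arctan x ≤ 0 := by linarith
        have := mul_nonpos_of_nonneg_of_nonpos (by linarith : (0:ℝ) ≤ 2 * s) this
        simpa [hg, mul_assoc] using this
      · have hs0 : s ≤ 0 := by
          rcases max_cases x 0 with ⟨h, _⟩ | ⟨h, _⟩
          · rw [ha, h] at h2; linarith
          · rw [ha, h] at h2; exact h2
        have : s = 0 := le_antisymm hs0 hs
        simp [hg, this]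
    · rcases le_or_gt x s with hsx | hsx
      · have : arctan x ≤ arctan s := Real.arctan_strictMono.monotone hsx
        have h0 : 0 ≤ arctan s - arctan x := by linarith
        have := mul_nonpos_of_nonpos_of_nonneg (by linarith : 2 * s ≤ 0) h0
        simpa [hg, mul_assoc] using this
      · exfalso
        rcases min_cases x 0 with ⟨h, _⟩ | ⟨h, _⟩
        · rw [hm, h] at h1; linarith
        · rw [hm, h] at h1; linarith
  refine ⟨sm, sp, hsmm, hspa, fun s => ⟨fun hs => ?_, fun hs => ?_⟩⟩
  · -- forward direction
    have hgs : g s = n := hs.symm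
    rcases le_or_gt s m with h | h
    · left
      exact hanti.injOn h hsm.2 (by rw [hgs, hgsm])
    · rcases le_or_gt a s with h' | h'
      · right
        exact hmono.injOn h' hsp.1 (by rw [hgs, hgsp])
      · exfalso
        have := hmid s h.le h'.le
        rw [hgs] at this; linarith
  · rcases hs with h | h
    · rw [h]; exact hgsm.symm
    · rw [h]; exact hgsp.symm
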